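/- Let B be a generalized Bayesian network. Then for any cutset C of B and any initial distribution γ0 over assignments of C, the Markov chain semantics and the limit average semantics agree: MCS(B, C, γ0) = LimAvg(B, C, γ0); in particular LimAvg(B, C, γ0) is defined for every γ0. -/

import Mathlib

open Filter
open scoped Classical

noncomputable section

namespace GBNPaper

variable {V : Type} [Fintype V] [DecidableEq V]

/-- A distribution over a finite type: nonnegative values summing to one. -/
def IsDist {α : Type} [Fintype α] (μ : α → ℝ) : Prop :=
  (∀ a, 0 ≤ μ a) ∧ ∑ a, μ a = 1

/-- The set of parents of a node `X` w.r.t. an edge set `E`. -/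
def Pre (E : Finset (V × V)) (X : V) : Finset V :=
  (E.filter fun e => e.2 = X).image Prod.fst

/-- The set of initial (parentless) nodes. -/
def InitSet (E : Finset (V × V)) : Finset V :=
  Finset.univ.filter fun X => Pre E X = ∅

/-- Assignments over a subset `U` of the nodes. -/
abbrev Asg (U : Finset V) : Type := {x // x ∈ U} → Bool

/-- A full assignment `b` agrees with a partial assignment `d` on `U`. -/
abbrev Agrees (b : V → Bool) (U : Finset V) (d : Asg U) : Prop :=
  ∀ x : {x // x ∈ U}, b x.1 = d x

/-- A generalized Bayesian network over node set `V`. -/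
structure GBN (V : Type) [Fintype V] [DecidableEq V] where
  /-- the directed edges -/
  edges : Finset (V × V)
  /-- CPT entries: the probability of `X = T` given an assignment of the parents of `X` -/
  cpt : (X : V) → Asg (Pre edges X) → ℝ
  cpt_nonneg : ∀ X b, 0 ≤ cpt X b
  cpt_le_one : ∀ X b, cpt X b ≤ 1
  /-- the initial distribution over assignments of the initial nodes -/
  ι : Asg (InitSet edges) → ℝ
  ι_dist : IsDist ι

/-- Probability of an event (set of full assignments) under `μ`. -/
def probIf (μ : (V → Bool) → ℝ) (p : (V → Bool) → Prop) : ℝ :=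
  ∑ b : V → Bool, if p b then μ b else 0

/-- The marginal distribution of `μ` on `U`. -/
def marginal (μ : (V → Bool) → ℝ) (U : Finset V) : Asg U → ℝ :=
  fun d => probIf μ fun b => Agrees b U d

/-- `Pr(X = v | parents as given by b)`. -/
def copyProb (B : GBN V) (X : V) (v : Bool) (b : V → Bool) : ℝ :=
  if v then B.cpt X (fun p => b p.1) else 1 - B.cpt X (fun p => b p.1)

/-- The standard BN semantics (chain rule) of a GBN. -/
def distBN (B : GBN V) (b : V → Bool) : ℝ :=
  B.ι (fun x => b x.1) *
    ∏ X ∈ Finset.univ \ InitSet B.edges, copyProb B X (b X) b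

/-- The edge set contains no directed cycle. -/
def Acyclic (E : Finset (V × V)) : Prop :=
  ∀ x : V, ¬ Relation.TransGen (fun a b => (a, b) ∈ E) x x

/-- `C` is a cutset: every directed cycle contains a node of `C`. -/
def IsCutset (E : Finset (V × V)) (C : Finset V) : Prop :=
  ∀ x : V, ¬ Relation.TransGen (fun a b => (a, b) ∈ E ∧ a ∉ C ∧ b ∉ C) x x

/-- The standard BN semantics of the `C`-dissected GBN `B↑C↑γ`, as a joint
distribution over assignments of the original nodes `V` together with
assignments of the copies `C'` of the cutset nodes. -/
def distDissect (B : GBN V) (C : Finset V) (γ : Asg C → ℝ)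
    (b : V → Bool) (c : Asg C) : ℝ :=
  B.ι (fun x => b x.1) * γ (fun x => b x.1) *
    (∏ X ∈ (Finset.univ \ InitSet B.edges) \ C, copyProb B X (b X) b) *
    ∏ Y ∈ C.attach, copyProb B Y.1 (c Y) b

/-- `Next(B,C,γ)`: restrict `dist_BN(B↑C↑γ)` to `(V∖C) ∪ C'` and re-identify
the copies with the original cutset nodes. -/
def Next (B : GBN V) (C : Finset V) (γ : Asg C → ℝ) (a : V → Bool) : ℝ :=
  ∑ b : V → Bool,
    if ∀ x : V, x ∉ C → b x = a x then distDissect B C γ b (fun y => a y.1) else 0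

/-- `Extend(B,C,γ) = dist_BN(B↑C↑γ)|_V`. -/
def Extend (B : GBN V) (C : Finset V) (γ : Asg C → ℝ) (a : V → Bool) : ℝ :=
  ∑ c : Asg C, distDissect B C γ a c

/-- Dirac (point) distribution. -/
def DiracD {α : Type} [DecidableEq α] (b : α) : α → ℝ := fun c => if c = b then 1 else 0

/-- Transition matrix of the cutset Markov chain `M_{B↑C}`:
`P(b,c) = Next(B,C,Dirac(b))|_C (c)`. -/
def cutsetP (B : GBN V) (C : Finset V) (b c : Asg C) : ℝ :=
  marginal (Next B C (DiracD b)) C c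

/-- Vector-matrix multiplication `γ·P`. -/
def vecMul {α : Type} [Fintype α] (γ : α → ℝ) (P : α → α → ℝ) : α → ℝ :=
  fun c => ∑ b, γ b * P b c

/-- The transient distributions `γ0·P^n`. -/
def matIter {α : Type} [Fintype α] (P : α → α → ℝ) (γ0 : α → ℝ) : ℕ → (α → ℝ)
  | 0 => γ0
  | n + 1 => vecMul (matIter P γ0 n) P

/-- The sequence `γ_{n+1} = Next(B,C,γ_n)|_C`. -/
def nextSeq (B : GBN V) (C : Finset V) (γ0 : Asg C → ℝ) : ℕ → (Asg C → ℝ)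
  | 0 => γ0
  | n + 1 => marginal (Next B C (nextSeq B C γ0 n)) C

/-- Cesàro averages of a sequence of vectors. -/
def cesaro {α : Type} (f : ℕ → α → ℝ) (n : ℕ) : α → ℝ :=
  fun a => (∑ i ∈ Finset.range (n + 1), f i a) / (n + 1)

/-- The Markov chain semantics `[B]_{MC-C}`: image of
`γ0 ↦ Extend(B,C,lrf^{γ0})` over all initial cutset distributions `γ0`,
where `lrf^{γ0}` is the Cesàro limit of the transient distributions. -/
def MCSem (B : GBN V) (C : Finset V) : Set ((V → Bool) → ℝ) :=
  { μ | ∃ γ0 γ, IsDist γ0 ∧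
      Tendsto (cesaro (matIter (cutsetP B C) γ0)) atTop (nhds γ) ∧
      μ = Extend B C γ }

/-- The limit semantics `[B]_{Lim-C}`. -/
def LimSem (B : GBN V) (C : Finset V) : Set ((V → Bool) → ℝ) :=
  { μ | ∃ γ0 γ, IsDist γ0 ∧
      Tendsto (nextSeq B C γ0) atTop (nhds γ) ∧
      μ = Extend B C γ }

/-- The limit average semantics `[B]_{LimAvg-C}`. -/
def LimAvgSem (B : GBN V) (C : Finset V) : Set ((V → Bool) → ℝ) :=
  { μ | ∃ γ0 γ, IsDist γ0 ∧
      Tendsto (cesaro (nextSeq B C γ0)) atTop (nhds γ) ∧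
      μ = Extend B C γ }

/-- The Markov chain semantics in stationary-distribution form:
`{ Extend(B,C,γ) : γ a distribution with γ = γ·P }`. -/
def MCStatSem (B : GBN V) (C : Finset V) : Set ((V → Bool) → ℝ) :=
  { μ | ∃ γ : Asg C → ℝ, IsDist γ ∧ γ = vecMul γ (cutsetP B C) ∧ μ = Extend B C γ }

/-- Strong CPT-consistency of `μ` for node `X`. -/
def StrongCPT (B : GBN V) (μ : (V → Bool) → ℝ) (X : V) : Prop :=
  ∀ c : Asg (Pre B.edges X),
    probIf μ (fun f => f X = true ∧ Agrees f (Pre B.edges X) c) =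
      probIf μ (fun f => Agrees f (Pre B.edges X) c) * B.cpt X c

/-- Weak CPT-consistency of `μ` for node `X`. -/
def WeakCPT (B : GBN V) (μ : (V → Bool) → ℝ) (X : V) : Prop :=
  probIf μ (fun f => f X = true) =
    ∑ c : Asg (Pre B.edges X),
      probIf μ (fun f => Agrees f (Pre B.edges X) c) * B.cpt X c

/-- The CPT semantics `[B]_{Cpt}`. -/
def CptSem (B : GBN V) : Set ((V → Bool) → ℝ) :=
  { μ | IsDist μ ∧ marginal μ (InitSet B.edges) = B.ι ∧
      ∀ X, X ∉ InitSet B.edges → StrongCPT B μ X }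

/-- `(X ⊥ Y | Z) ∈ Indep(μ)`. -/
def IndepTriple (μ : (V → Bool) → ℝ) (X Y Z : Finset V) : Prop :=
  ∀ (a : Asg X) (b : Asg Y) (c : Asg Z),
    probIf μ (fun f => Agrees f Y b ∧ Agrees f Z c) = 0 ∨
    probIf μ (fun f => Agrees f X a ∧ Agrees f Y b ∧ Agrees f Z c) /
        probIf μ (fun f => Agrees f Y b ∧ Agrees f Z c) =
      probIf μ (fun f => Agrees f X a ∧ Agrees f Z c) /
        probIf μ (fun f => Agrees f Z c)

def PairwiseDisjoint3 (X Y Z : Finset V) : Prop :=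
  Disjoint X Y ∧ Disjoint X Z ∧ Disjoint Y Z

/-- `Indep(μ)` as a set of triples. -/
def IndepSet (μ : (V → Bool) → ℝ) : Set (Finset V × Finset V × Finset V) :=
  { t | PairwiseDisjoint3 t.1 t.2.1 t.2.2 ∧ IndepTriple μ t.1 t.2.1 t.2.2 }

/-- The CPT-I semantics `[B]_{Cpt-I}`. -/
def CptISem (B : GBN V) (I : Set (Finset V × Finset V × Finset V)) :
    Set ((V → Bool) → ℝ) :=
  { μ | μ ∈ CptSem B ∧ I ⊆ IndepSet μ }

/-! d-separation -/

def Adjacent (E : Finset (V × V)) (x y : V) : Prop := (x, y) ∈ E ∨ (y, x) ∈ E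

/-- Reachability along directed edges (including the node itself). -/
def Reaches (E : Finset (V × V)) (x y : V) : Prop :=
  Relation.ReflTransGen (fun a b => (a, b) ∈ E) x y

/-- An intermediate triple `a, w, b` on a path blocks it given `Z`:
either `w ∈ Z` and `w` lies in a chain or a fork, or `w` lies in a collider
and no node reachable from `w` (including `w`) is in `Z`. -/
def BlockedTriple (E : Finset (V × V)) (Z : Finset V) (a w b : V) : Prop :=
  (w ∈ Z ∧ (((a, w) ∈ E ∧ (w, b) ∈ E) ∨ ((b, w) ∈ E ∧ (w, a) ∈ E) ∨
      ((w, a) ∈ E ∧ (w, b) ∈ E))) ∨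
  ((a, w) ∈ E ∧ (b, w) ∈ E ∧ ∀ d, Reaches E w d → d ∉ Z)

/-- A path (as a list of nodes) is blocked given `Z`. -/
def Blocked (E : Finset (V × V)) (Z : Finset V) (W : List V) : Prop :=
  ∃ l₁ a w b l₂, W = l₁ ++ a :: w :: b :: l₂ ∧ BlockedTriple E Z a w b

/-- `x` and `y` are d-separated given `Z`: every undirected simple path
from `x` to `y` is blocked given `Z`. -/
def DSepNodes (E : Finset (V × V)) (x y : V) (Z : Finset V) : Prop :=
  ∀ W : List V, W.Chain' (Adjacent E) → W.Nodup →
    W.head? = some x → W.getLast? = some y → Blocked E Z W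

def DSep (E : Finset (V × V)) (X Y Z : Finset V) : Prop :=
  ∀ x ∈ X, ∀ y ∈ Y, DSepNodes E x y Z

/-- `d-sep(G)` as a set of triples of pairwise disjoint node sets. -/
def DSepSet (E : Finset (V × V)) : Set (Finset V × Finset V × Finset V) :=
  { t | PairwiseDisjoint3 t.1 t.2.1 t.2.2 ∧ DSep E t.1 t.2.1 t.2.2 }

/-- `Close(G)`: add an edge between every ordered pair of distinct initial nodes. -/
def Close (E : Finset (V × V)) : Finset (V × V) :=
  E ∪ ((InitSet E ×ˢ InitSet E).filter fun p => p.1 ≠ p.2)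

/-- `G[C]`: remove all edges into nodes of `C` (so the nodes of `C` are initial). -/
def CutGraph (E : Finset (V × V)) (C : Finset V) : Finset (V × V) :=
  E.filter fun e => e.2 ∉ C

/-- `ι` is a product distribution: it factorizes into its single-node marginals,
i.e. the initial nodes are mutually independent under `ι`. -/
def IsProductDist {U : Finset V} (ι : Asg U → ℝ) : Prop :=
  ∀ b : Asg U,
    ι b = ∏ x : {x // x ∈ U}, ∑ b' : Asg U, if b' x = b x then ι b' else 0

/-! Markov chain notions -/

/-- Reachability in the underlying graph of a DTMC. -/
def MCReach {α : Type} (P : α → α → ℝ) (x y : α) : Prop :=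
  Relation.ReflTransGen (fun a b => 0 < P a b) x y

/-- Bottom strongly connected component of a DTMC: nonempty, closed under
reachability, and strongly connected. -/
def IsBSCC {α : Type} (P : α → α → ℝ) (D : Set α) : Prop :=
  D.Nonempty ∧ (∀ x ∈ D, ∀ y, MCReach P x y → y ∈ D) ∧
    ∀ x ∈ D, ∀ y ∈ D, MCReach P x y

/-- Walks of a given length along positive-probability transitions. -/
def walkLen {α : Type} (P : α → α → ℝ) : ℕ → α → α → Prop
  | 0, x, y => x = y
  | n + 1, x, y => ∃ z, 0 < P x z ∧ walkLen P n z y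

/-- The lengths of the cycles of `D`. -/
def CycleLens {α : Type} (P : α → α → ℝ) (D : Set α) : Set ℕ :=
  { n | 0 < n ∧ ∃ x ∈ D, walkLen P n x x }

/-- `D` is aperiodic: the gcd of the lengths of its cycles equals 1. -/
def AperiodicBSCC {α : Type} (P : α → α → ℝ) (D : Set α) : Prop :=
  ∀ d : ℕ, (∀ n ∈ CycleLens P D, d ∣ n) → d = 1

/-- `D` is periodic: the gcd of the lengths of its cycles is greater than 1. -/
def PeriodicBSCC {α : Type} (P : α → α → ℝ) (D : Set α) : Prop :=
  ∃ d : ℕ, 1 < d ∧ ∀ n ∈ CycleLens P D, d ∣ n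

/-- A GBN is smooth if all CPT entries and all values of `ι` lie in `(0,1)`. -/
def Smooth (B : GBN V) : Prop :=
  (∀ X b, B.cpt X b ∈ Set.Ioo (0 : ℝ) 1) ∧ ∀ d, B.ι d ∈ Set.Ioo (0 : ℝ) 1


/-! ### Auxiliary machinery for `stmt5` -/

section CesaroAux
variable {α : Type} [Fintype α] [DecidableEq α]

/-- Matrix multiplication on square arrays. -/
def mmulM (M N : α → α → ℝ) : α → α → ℝ := fun i j => ∑ k, M i k * N k j

/-- Matrix powers. -/
def mpowM (P : α → α → ℝ) : ℕ → α → α → ℝ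
  | 0 => fun i j => if i = j then 1 else 0
  | n+1 => mmulM (mpowM P n) P

set_option linter.unusedSectionVars false

lemma mmulM_assoc (A B C : α → α → ℝ) : mmulM (mmulM A B) C = mmulM A (mmulM B C) := by
  funext i j
  simp only [mmulM, Finset.sum_mul, Finset.mul_sum]
  rw [Finset.sum_comm]
  exact Finset.sum_congr rfl fun k _ => Finset.sum_congr rfl fun l _ => by ring

lemma one_mmulM (P : α → α → ℝ) : mmulM (mpowM P 0) P = P := by
  funext i j
  simp only [mmulM, mpowM, ite_mul, one_mul, zero_mul]
  simp

lemma mmulM_one (P : α → α → ℝ) : mmulM P (mpowM P 0) = P := by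
  funext i j
  simp only [mmulM, mpowM, mul_ite, mul_one, mul_zero]
  simp

lemma mpowM_succ_left (P : α → α → ℝ) (n : ℕ) :
    mpowM P (n+1) = mmulM P (mpowM P n) := by
  induction n with
  | zero => show mmulM (mpowM P 0) P = mmulM P (mpowM P 0); rw [one_mmulM, mmulM_one]
  | succ n ih =>
      calc mpowM P (n+2) = mmulM (mpowM P (n+1)) P := rfl
        _ = mmulM (mmulM P (mpowM P n)) P := by rw [ih]
        _ = mmulM P (mmulM (mpowM P n) P) := mmulM_assoc _ _ _
        _ = mmulM P (mpowM P (n+1)) := rfl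

variable {P : α → α → ℝ} (hnn : ∀ i j, 0 ≤ P i j) (hrow : ∀ i, ∑ j, P i j ≤ 1)

include hnn in
lemma mpowM_nonneg : ∀ n i j, 0 ≤ mpowM P n i j := by
  intro n
  induction n with
  | zero => intro i j; simp only [mpowM]; split <;> norm_num
  | succ n ih =>
      intro i j
      exact Finset.sum_nonneg fun k _ => mul_nonneg (ih i k) (hnn k j)

include hnn hrow in
lemma mpowM_rowsum : ∀ n i, ∑ j, mpowM P n i j ≤ 1 := by
  intro n
  induction n with
  | zero => intro i; simp [mpowM]
  | succ n ih =>
      intro i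
      show ∑ j, ∑ k, mpowM P n i k * P k j ≤ 1
      rw [Finset.sum_comm]
      calc ∑ k, ∑ j, mpowM P n i k * P k j
          = ∑ k, mpowM P n i k * ∑ j, P k j := by
            exact Finset.sum_congr rfl fun k _ => by rw [Finset.mul_sum]
        _ ≤ ∑ k, mpowM P n i k * 1 := by
            refine Finset.sum_le_sum fun k _ => ?_
            exact mul_le_mul_of_nonneg_left (hrow k) (mpowM_nonneg hnn n i k)
        _ = ∑ k, mpowM P n i k := by simp
        _ ≤ 1 := ih i

include hnn hrow in
lemma mpowM_le_one : ∀ n i j, mpowM P n i j ≤ 1 := fun n i j =>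
  le_trans (Finset.single_le_sum (fun k _ => mpowM_nonneg hnn n i k) (Finset.mem_univ j))
    (mpowM_rowsum hnn hrow n i)

end CesaroAux

/-- Cesàro averages of powers of `P`. -/
def MnM {α : Type} [Fintype α] [DecidableEq α] (P : α → α → ℝ) (n : ℕ) : α → α → ℝ :=
  fun i j => (∑ k ∈ Finset.range (n+1), mpowM P k i j) / ((n : ℝ) + 1)

section CesaroAux2
set_option linter.unusedSectionVars false
variable {α : Type} [Fintype α] [DecidableEq α]
variable {P : α → α → ℝ} (hnn : ∀ i j, 0 ≤ P i j) (hrow : ∀ i, ∑ j, P i j ≤ 1)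

include hnn hrow in
lemma MnM_mem : ∀ n i j, MnM P n i j ∈ Set.Icc (0:ℝ) 1 := by
  intro n i j
  have hpos : (0:ℝ) < (n : ℝ) + 1 := by positivity
  simp only [MnM, Set.mem_Icc]
  constructor
  · exact div_nonneg (Finset.sum_nonneg fun k _ => mpowM_nonneg hnn k i j) hpos.le
  · rw [div_le_one hpos]
    calc ∑ k ∈ Finset.range (n+1), mpowM P k i j
        ≤ ∑ _k ∈ Finset.range (n+1), (1:ℝ) :=
          Finset.sum_le_sum fun k _ => mpowM_le_one hnn hrow k i j
      _ = (n : ℝ) + 1 := by simp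

lemma sum_succ_telescope (n : ℕ) (i j : α) :
    ∑ k ∈ Finset.range (n+1), mpowM P (k+1) i j
      = (∑ k ∈ Finset.range (n+1), mpowM P k i j) + mpowM P (n+1) i j - mpowM P 0 i j := by
  have h1 := Finset.sum_range_succ' (fun k => mpowM P k i j) (n+1)
  have h2 := Finset.sum_range_succ (fun k => mpowM P k i j) (n+1)
  linarith

lemma mmulM_MnM_right (n : ℕ) (i j : α) :
    mmulM (MnM P n) P i j
      = MnM P n i j + (mpowM P (n+1) i j - mpowM P 0 i j) / ((n : ℝ) + 1) := by
  have h1 : mmulM (MnM P n) P i j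
      = (∑ k ∈ Finset.range (n+1), mpowM P (k+1) i j) / ((n : ℝ) + 1) := by
    simp only [mmulM, MnM, div_mul_eq_mul_div]
    rw [← Finset.sum_div]
    congr 1
    calc ∑ x, (∑ k ∈ Finset.range (n+1), mpowM P k i x) * P x j
        = ∑ x, ∑ k ∈ Finset.range (n+1), mpowM P k i x * P x j := by
          simp [Finset.sum_mul]
      _ = ∑ k ∈ Finset.range (n+1), ∑ x, mpowM P k i x * P x j := Finset.sum_comm
      _ = ∑ k ∈ Finset.range (n+1), mpowM P (k+1) i j := rfl
  rw [h1, sum_succ_telescope]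
  simp only [MnM]
  ring

lemma mmulM_MnM_left (n : ℕ) (i j : α) :
    mmulM P (MnM P n) i j
      = MnM P n i j + (mpowM P (n+1) i j - mpowM P 0 i j) / ((n : ℝ) + 1) := by
  have h1 : mmulM P (MnM P n) i j
      = (∑ k ∈ Finset.range (n+1), mpowM P (k+1) i j) / ((n : ℝ) + 1) := by
    simp only [mmulM, MnM, mul_div_assoc']
    rw [← Finset.sum_div]
    congr 1
    calc ∑ x, P i x * ∑ k ∈ Finset.range (n+1), mpowM P k x j
        = ∑ x, ∑ k ∈ Finset.range (n+1), P i x * mpowM P k x j := by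
          simp [Finset.mul_sum]
      _ = ∑ k ∈ Finset.range (n+1), ∑ x, P i x * mpowM P k x j := Finset.sum_comm
      _ = ∑ k ∈ Finset.range (n+1), mpowM P (k+1) i j := by
          refine Finset.sum_congr rfl fun k _ => ?_
          rw [mpowM_succ_left]
          rfl
  rw [h1, sum_succ_telescope]
  simp only [MnM]
  ring

include hnn hrow in
lemma rem_tendsto_zero (i j : α) :
    Tendsto (fun n : ℕ => (mpowM P (n+1) i j - mpowM P 0 i j) / ((n : ℝ) + 1))
      atTop (nhds 0) := by
  refine squeeze_zero_norm (a := fun n : ℕ => 1 / ((n : ℝ) + 1)) (fun n => ?_)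
    tendsto_one_div_add_atTop_nhds_zero_nat
  · have hpos : (0:ℝ) < (n : ℝ) + 1 := by positivity
    have h1 := mpowM_nonneg hnn (n+1) i j
    have h2 := mpowM_le_one hnn hrow (n+1) i j
    have h3 := mpowM_nonneg hnn 0 i j
    have h4 := mpowM_le_one hnn hrow 0 i j
    have habs : |mpowM P (n + 1) i j - mpowM P 0 i j| ≤ 1 := by
      rw [abs_sub_le_iff]
      constructor <;> linarith
    rw [Real.norm_eq_abs, abs_div, abs_of_pos hpos]
    show _ ≤ 1 / ((n:ℝ)+1)
    gcongr

include hnn hrow in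
theorem cesaro_MnM_tendsto : ∃ Q, Tendsto (fun n => MnM P n) atTop (nhds Q) := by
  classical
  set S : Set (α → α → ℝ) := Set.univ.pi fun _ => Set.univ.pi fun _ => Set.Icc (0:ℝ) 1 with hS
  have hScomp : IsCompact S :=
    isCompact_univ_pi fun _ => isCompact_univ_pi fun _ => isCompact_Icc
  have hmem : ∀ n, MnM P n ∈ S := by
    intro n
    rw [hS, Set.mem_univ_pi]
    intro i
    rw [Set.mem_univ_pi]
    intro j
    exact MnM_mem hnn hrow n i j
  have coord : ∀ {f : ℕ → α → α → ℝ} {Q : α → α → ℝ},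
      Tendsto f atTop (nhds Q) → ∀ a b, Tendsto (fun n => f n a b) atTop (nhds (Q a b)) :=
    fun h a b => tendsto_pi_nhds.mp (tendsto_pi_nhds.mp h a) b
  have key : ∀ (φ : ℕ → ℕ), Tendsto φ atTop atTop → ∀ Q : α → α → ℝ,
      Tendsto (fun n => MnM P (φ n)) atTop (nhds Q) →
      mmulM Q P = Q ∧ mmulM P Q = Q := by
    intro φ hφ Q hQ
    have hc := coord hQ
    constructor
    · funext i j
      have t1 : Tendsto (fun n => mmulM (MnM P (φ n)) P i j) atTop (nhds (mmulM Q P i j)) := by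
        simp only [mmulM]
        exact tendsto_finset_sum _ fun k _ => (hc i k).mul_const _
      have t2 : Tendsto (fun n => mmulM (MnM P (φ n)) P i j) atTop (nhds (Q i j)) := by
        have := (hc i j).add (((rem_tendsto_zero hnn hrow i j).comp hφ))
        rw [add_zero] at this
        refine this.congr fun n => ?_
        rw [mmulM_MnM_right]
        rfl
      exact tendsto_nhds_unique t1 t2
    · funext i j
      have t1 : Tendsto (fun n => mmulM P (MnM P (φ n)) i j) atTop (nhds (mmulM P Q i j)) := by
        simp only [mmulM]
        exact tendsto_finset_sum _ fun k _ => (hc k j).const_mul _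
      have t2 : Tendsto (fun n => mmulM P (MnM P (φ n)) i j) atTop (nhds (Q i j)) := by
        have := (hc i j).add (((rem_tendsto_zero hnn hrow i j).comp hφ))
        rw [add_zero] at this
        refine this.congr fun n => ?_
        rw [mmulM_MnM_left]
        rfl
      exact tendsto_nhds_unique t1 t2
  have uniq : ∀ Q Q' : α → α → ℝ,
      (∃ φ : ℕ → ℕ, Tendsto φ atTop atTop ∧ Tendsto (fun n => MnM P (φ n)) atTop (nhds Q)) →
      (∃ φ : ℕ → ℕ, Tendsto φ atTop atTop ∧ Tendsto (fun n => MnM P (φ n)) atTop (nhds Q')) →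
      Q = Q' := by
    rintro Q Q' ⟨φ, hφ, hQ⟩ ⟨φ', hφ', hQ'⟩
    obtain ⟨hQP, hPQ⟩ := key φ hφ Q hQ
    obtain ⟨hQ'P, hPQ'⟩ := key φ' hφ' Q' hQ'
    have hQr : ∀ k, mmulM Q (mpowM P k) = Q := by
      intro k
      induction k with
      | zero => exact mmulM_one Q
      | succ k ih =>
          show mmulM Q (mmulM (mpowM P k) P) = Q
          rw [← mmulM_assoc, ih, hQP]
    have hQ'l : ∀ k, mmulM (mpowM P k) Q' = Q' := by
      intro k
      induction k with
      | zero =>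
          funext i j
          simp only [mmulM, mpowM, ite_mul, one_mul, zero_mul]
          simp
      | succ k ih =>
          rw [mpowM_succ_left, mmulM_assoc, ih, hPQ']
    have hQMn : ∀ m, mmulM Q (MnM P m) = Q := by
      intro m
      funext i j
      have hne : ((m:ℝ)+1) ≠ 0 := by positivity
      calc mmulM Q (MnM P m) i j
          = ∑ x, Q i x * (∑ k ∈ Finset.range (m+1), mpowM P k x j) / ((m:ℝ)+1) := by
            simp only [mmulM, MnM, mul_div_assoc']
        _ = (∑ x, ∑ k ∈ Finset.range (m+1), Q i x * mpowM P k x j) / ((m:ℝ)+1) := by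
            rw [← Finset.sum_div]
            congr 1
            exact Finset.sum_congr rfl fun x _ => by rw [Finset.mul_sum]
        _ = (∑ k ∈ Finset.range (m+1), ∑ x, Q i x * mpowM P k x j) / ((m:ℝ)+1) := by
            rw [Finset.sum_comm]
        _ = (∑ k ∈ Finset.range (m+1), Q i j) / ((m:ℝ)+1) := by
            congr 1
            exact Finset.sum_congr rfl fun k _ => congrFun (congrFun (hQr k) i) j
        _ = Q i j := by
            rw [Finset.sum_const, Finset.card_range, nsmul_eq_mul]
            push_cast
            field_simp
    have hMnQ' : ∀ m, mmulM (MnM P m) Q' = Q' := by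
      intro m
      funext i j
      have hne : ((m:ℝ)+1) ≠ 0 := by positivity
      calc mmulM (MnM P m) Q' i j
          = ∑ x, (∑ k ∈ Finset.range (m+1), mpowM P k i x) * Q' x j / ((m:ℝ)+1) := by
            simp only [mmulM, MnM, div_mul_eq_mul_div]
        _ = (∑ x, ∑ k ∈ Finset.range (m+1), mpowM P k i x * Q' x j) / ((m:ℝ)+1) := by
            rw [← Finset.sum_div]
            congr 1
            exact Finset.sum_congr rfl fun x _ => by rw [Finset.sum_mul]
        _ = (∑ k ∈ Finset.range (m+1), ∑ x, mpowM P k i x * Q' x j) / ((m:ℝ)+1) := by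
            rw [Finset.sum_comm]
        _ = (∑ k ∈ Finset.range (m+1), Q' i j) / ((m:ℝ)+1) := by
            congr 1
            exact Finset.sum_congr rfl fun k _ => congrFun (congrFun (hQ'l k) i) j
        _ = Q' i j := by
            rw [Finset.sum_const, Finset.card_range, nsmul_eq_mul]
            push_cast
            field_simp
    have hcQ' := coord hQ'
    have hcQ := coord hQ
    have e1 : mmulM Q Q' = Q := by
      funext i j
      have t1 : Tendsto (fun n => mmulM Q (MnM P (φ' n)) i j) atTop (nhds (mmulM Q Q' i j)) := by
        simp only [mmulM]
        exact tendsto_finset_sum _ fun k _ => (hcQ' k j).const_mul _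
      have t2 : Tendsto (fun n => mmulM Q (MnM P (φ' n)) i j) atTop (nhds (Q i j)) := by
        have : (fun n => mmulM Q (MnM P (φ' n)) i j) = fun _ => Q i j := by
          funext n
          exact congrFun (congrFun (hQMn (φ' n)) i) j
        rw [this]
        exact tendsto_const_nhds
      exact tendsto_nhds_unique t1 t2
    have e2 : mmulM Q Q' = Q' := by
      funext i j
      have t1 : Tendsto (fun n => mmulM (MnM P (φ n)) Q' i j) atTop (nhds (mmulM Q Q' i j)) := by
        simp only [mmulM]
        exact tendsto_finset_sum _ fun k _ => (hcQ i k).mul_const _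
      have t2 : Tendsto (fun n => mmulM (MnM P (φ n)) Q' i j) atTop (nhds (Q' i j)) := by
        have : (fun n => mmulM (MnM P (φ n)) Q' i j) = fun _ => Q' i j := by
          funext n
          exact congrFun (congrFun (hMnQ' (φ n)) i) j
        rw [this]
        exact tendsto_const_nhds
      exact tendsto_nhds_unique t1 t2
    rw [← e1, e2]
  obtain ⟨Q, _, φ, hφmono, hφlim⟩ := hScomp.tendsto_subseq hmem
  refine ⟨Q, ?_⟩
  apply Filter.tendsto_of_subseq_tendsto
  intro ns hns
  obtain ⟨Q', _, ψ, hψmono, hψlim⟩ :=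
    hScomp.tendsto_subseq (x := fun n => MnM P (ns n)) (fun n => hmem _)
  have hQ'Q : Q' = Q := by
    apply uniq
    · exact ⟨ns ∘ ψ, hns.comp hψmono.tendsto_atTop, hψlim⟩
    · exact ⟨φ, hφmono.tendsto_atTop, hφlim⟩
  exact ⟨ψ, hQ'Q ▸ hψlim⟩

end CesaroAux2

/-! ### GBN-specific lemmas -/

section GBNAux
set_option linter.unusedSectionVars false
variable {V : Type} [Fintype V] [DecidableEq V]

lemma copyProb_nonneg (B : GBN V) (X : V) (v : Bool) (b : V → Bool) :
    0 ≤ copyProb B X v b := by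
  unfold copyProb
  split
  · exact B.cpt_nonneg _ _
  · linarith [B.cpt_le_one X (fun p => b p.1)]

lemma copyProb_sum (B : GBN V) (X : V) (b : V → Bool) :
    copyProb B X true b + copyProb B X false b = 1 := by
  simp [copyProb]

lemma DiracD_nonneg {β : Type} [DecidableEq β] (b c : β) : 0 ≤ DiracD b c := by
  unfold DiracD
  split <;> norm_num

lemma distDissect_nonneg (B : GBN V) (C : Finset V) (γ : Asg C → ℝ) (hγ : ∀ d, 0 ≤ γ d)
    (b : V → Bool) (c : Asg C) : 0 ≤ distDissect B C γ b c := by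
  unfold distDissect
  refine mul_nonneg (mul_nonneg (mul_nonneg (B.ι_dist.1 _) (hγ _)) ?_) ?_
  · exact Finset.prod_nonneg fun X _ => copyProb_nonneg B X _ b
  · exact Finset.prod_nonneg fun Y _ => copyProb_nonneg B Y.1 _ b

lemma Next_nonneg (B : GBN V) (C : Finset V) (γ : Asg C → ℝ) (hγ : ∀ d, 0 ≤ γ d)
    (a : V → Bool) : 0 ≤ Next B C γ a := by
  unfold Next
  refine Finset.sum_nonneg fun b _ => ?_
  split
  · exact distDissect_nonneg B C γ hγ _ _
  · exact le_refl 0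

lemma cutsetP_nonneg (B : GBN V) (C : Finset V) (b c : Asg C) : 0 ≤ cutsetP B C b c := by
  unfold cutsetP marginal probIf
  refine Finset.sum_nonneg fun a _ => ?_
  split
  · exact Next_nonneg B C _ (fun d => DiracD_nonneg b d) a
  · exact le_refl 0

/-! Linearity of `Next` in the cutset distribution. -/

lemma distDissect_dirac_sum (B : GBN V) (C : Finset V) (γ : Asg C → ℝ)
    (b : V → Bool) (c : Asg C) :
    distDissect B C γ b c = ∑ d : Asg C, γ d * distDissect B C (DiracD d) b c := by
  have h : ∀ d : Asg C, γ d * distDissect B C (DiracD d) b c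
      = if (fun x : {x // x ∈ C} => b x.1) = d then
          γ d * distDissect B C (DiracD d) b c else 0 := by
    intro d
    split
    · rfl
    · rename_i h
      unfold distDissect DiracD
      rw [if_neg h]
      ring
  rw [Finset.sum_congr rfl fun d _ => h d, Finset.sum_ite_eq, if_pos (Finset.mem_univ _)]
  unfold distDissect DiracD
  rw [if_pos rfl]
  ring

lemma Next_dirac_sum (B : GBN V) (C : Finset V) (γ : Asg C → ℝ) (a : V → Bool) :
    Next B C γ a = ∑ d : Asg C, γ d * Next B C (DiracD d) a := by
  unfold Next
  simp only [Finset.mul_sum]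
  rw [Finset.sum_comm]
  refine Finset.sum_congr rfl fun b _ => ?_
  split_ifs with h
  · exact distDissect_dirac_sum B C γ b _
  · simp

lemma marginal_Next_eq (B : GBN V) (C : Finset V) (γ : Asg C → ℝ) (c : Asg C) :
    marginal (Next B C γ) C c = ∑ d : Asg C, γ d * cutsetP B C d c := by
  unfold cutsetP marginal probIf
  simp only [Finset.mul_sum]
  rw [Finset.sum_comm]
  refine Finset.sum_congr rfl fun a _ => ?_
  split_ifs with h
  · exact Next_dirac_sum B C γ a
  · simp

lemma nextSeq_eq_matIter (B : GBN V) (C : Finset V) (γ0 : Asg C → ℝ) :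
    ∀ n, nextSeq B C γ0 n = matIter (cutsetP B C) γ0 n := by
  intro n
  induction n with
  | zero => rfl
  | succ n ih =>
      show marginal (Next B C (nextSeq B C γ0 n)) C
          = vecMul (matIter (cutsetP B C) γ0 n) (cutsetP B C)
      rw [ih]
      funext c
      rw [marginal_Next_eq]
      rfl

/-! Substochasticity of the cutset transition matrix. -/

lemma mem_Pre {E : Finset (V × V)} {X Y : V} : X ∈ Pre E Y ↔ (X, Y) ∈ E := by
  unfold Pre
  simp only [Finset.mem_image, Finset.mem_filter]
  constructor
  · rintro ⟨e, ⟨he, h2⟩, h1⟩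
    have : e = (X, Y) := Prod.ext h1 h2
    rwa [this] at he
  · intro h
    exact ⟨(X, Y), ⟨h, rfl⟩, rfl⟩

lemma exists_sink (E : Finset (V × V)) (C : Finset V) (hC : IsCutset E C)
    (T : Finset V) (hT : T.Nonempty) (hTC : ∀ x ∈ T, x ∉ C) :
    ∃ X ∈ T, ∀ Y ∈ T, (X, Y) ∉ E := by
  let r : V → V → Prop := fun a b =>
    Relation.TransGen (fun u v => (u, v) ∈ E ∧ u ∉ C ∧ v ∉ C) b a
  haveI : IsTrans V r := ⟨fun a b c h1 h2 => Relation.TransGen.trans h2 h1⟩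
  haveI : IsIrrefl V r := ⟨fun a h => hC a h⟩
  obtain ⟨X, hXT, hmin⟩ := (Finite.wellFounded_of_trans_of_irrefl r).has_min
    (↑T : Set V) (Finset.coe_nonempty.mpr hT)
  refine ⟨X, hXT, fun Y hY hE => ?_⟩
  exact hmin Y hY (Relation.TransGen.single ⟨hE, hTC X hXT, hTC Y hY⟩)

/-- The set of nodes that are neither initial nor in the cutset. -/
def Dset (B : GBN V) (C : Finset V) : Finset V := (Finset.univ \ InitSet B.edges) \ C

/-- Partially summed-out version of the dissected chain-rule sum. -/
def Wfun (B : GBN V) (C : Finset V) (b0 : Asg C) (T : Finset V) : ℝ :=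
  ∑ b : V → Bool,
    B.ι (fun x => b x.1) * DiracD b0 (fun x => b x.1) *
      (∏ X ∈ T, copyProb B X (b X) b) *
      ∏ X ∈ Dset B C \ T, (if b X = false then (1:ℝ) else 0)

lemma flip_sum (X : V) (H : (V → Bool) → ℝ)
    (hH : ∀ b v, H (Function.update b X v) = H b)
    (g : Bool → (V → Bool) → ℝ)
    (hg : ∀ v b w, g v (Function.update b X w) = g v b)
    (hsum : ∀ b, g true b + g false b = 1) :
    ∑ b : V → Bool, H b * g (b X) b = (∑ b : V → Bool, H b) / 2 := by
  classical
  have hinv : Function.Involutive (fun b : V → Bool => Function.update b X (!(b X))) := by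
    intro b
    simp only [Function.update_self]
    rw [Function.update_idem, Bool.not_not, Function.update_eq_self]
  have key : ∑ b : V → Bool, H b * g (b X) b = ∑ b : V → Bool, H b * g (!(b X)) b := by
    have := Equiv.sum_comp (hinv.toPerm _) (fun b : V → Bool => H b * g (b X) b)
    rw [← this]
    refine Finset.sum_congr rfl fun b _ => ?_
    have h1 : (hinv.toPerm _) b = Function.update b X (!(b X)) := rfl
    rw [h1, hH, Function.update_self, hg]
  have h2 : (∑ b : V → Bool, H b * g (b X) b) + (∑ b : V → Bool, H b * g (!(b X)) b)
      = ∑ b : V → Bool, H b := by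
    rw [← Finset.sum_add_distrib]
    refine Finset.sum_congr rfl fun b _ => ?_
    have h3 : g (b X) b + g (!(b X)) b = 1 := by
      cases hb : b X
      · rw [Bool.not_false, add_comm]
        exact hsum b
      · rw [Bool.not_true]
        exact hsum b
    rw [← mul_add, h3, mul_one]
  linarith [key, h2]

lemma Wfun_step (B : GBN V) (C : Finset V) (b0 : Asg C)
    (T : Finset V) (hTD : T ⊆ Dset B C) (X : V) (hXT : X ∈ T)
    (hmax : ∀ Y ∈ T, (X, Y) ∉ B.edges) :
    Wfun B C b0 T = Wfun B C b0 (T.erase X) := by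
  classical
  have hXD : X ∈ Dset B C := hTD hXT
  have hXI : X ∉ InitSet B.edges := by
    have h := Finset.mem_sdiff.mp hXD
    exact (Finset.mem_sdiff.mp h.1).2
  have hXC : X ∉ C := (Finset.mem_sdiff.mp hXD).2
  set H : (V → Bool) → ℝ := fun b =>
    B.ι (fun x => b x.1) * DiracD b0 (fun x => b x.1) *
      (∏ Y ∈ T.erase X, copyProb B Y (b Y) b) *
      ∏ Y ∈ Dset B C \ T, (if b Y = false then (1:ℝ) else 0) with hHdef
  have hH : ∀ b v, H (Function.update b X v) = H b := by
    intro b v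
    simp only [hHdef]
    have e1 : (fun x : {x // x ∈ InitSet B.edges} => Function.update b X v x.1)
        = fun x => b x.1 := by
      funext x
      refine Function.update_of_ne (fun h => hXI ?_) _ _
      rw [← h]
      exact x.2
    have e2 : (fun x : {x // x ∈ C} => Function.update b X v x.1)
        = fun x => b x.1 := by
      funext x
      refine Function.update_of_ne (fun h => hXC ?_) _ _
      rw [← h]
      exact x.2
    have e3 : ∏ Y ∈ T.erase X, copyProb B Y (Function.update b X v Y) (Function.update b X v)
        = ∏ Y ∈ T.erase X, copyProb B Y (b Y) b := by
      refine Finset.prod_congr rfl fun Y hY => ?_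
      have hYX : Y ≠ X := Finset.ne_of_mem_erase hY
      have hYT : Y ∈ T := Finset.mem_of_mem_erase hY
      have harg : (fun p : {x // x ∈ Pre B.edges Y} => Function.update b X v p.1)
          = fun p => b p.1 := by
        funext p
        refine Function.update_of_ne ?_ _ _
        intro h
        have hp := mem_Pre.mp p.2
        rw [h] at hp
        exact hmax Y hYT hp
      unfold copyProb
      rw [Function.update_of_ne hYX, harg]
    have e4 : ∏ Y ∈ Dset B C \ T,
          (if Function.update b X v Y = false then (1:ℝ) else 0)
        = ∏ Y ∈ Dset B C \ T, (if b Y = false then (1:ℝ) else 0) := by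
      refine Finset.prod_congr rfl fun Y hY => ?_
      have hYX : Y ≠ X := fun h => (Finset.mem_sdiff.mp hY).2 (h ▸ hXT)
      rw [Function.update_of_ne hYX]
    rw [e1, e2, e3, e4]
  have hg : ∀ v b w, copyProb B X v (Function.update b X w) = copyProb B X v b := by
    intro v b w
    have harg : (fun p : {x // x ∈ Pre B.edges X} => Function.update b X w p.1)
        = fun p => b p.1 := by
      funext p
      refine Function.update_of_ne ?_ _ _
      intro h
      have hp := mem_Pre.mp p.2
      rw [h] at hp
      exact hmax X hXT hp
    unfold copyProb
    rw [harg]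
  have hL : Wfun B C b0 T = ∑ b : V → Bool, H b * copyProb B X (b X) b := by
    unfold Wfun
    refine Finset.sum_congr rfl fun b _ => ?_
    rw [hHdef]
    rw [← Finset.mul_prod_erase T _ hXT]
    ring
  have hR : Wfun B C b0 (T.erase X)
      = ∑ b : V → Bool, H b * (if b X = false then (1:ℝ) else 0) := by
    unfold Wfun
    refine Finset.sum_congr rfl fun b _ => ?_
    have hset : Dset B C \ T.erase X = insert X (Dset B C \ T) := by
      ext y
      simp only [Finset.mem_sdiff, Finset.mem_erase, Finset.mem_insert]
      by_cases hy : y = X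
      · subst hy
        simp [hXD, hXT]
      · simp only [hy, false_or]
        constructor
        · rintro ⟨h1, h2⟩
          exact ⟨h1, fun h => h2 ⟨hy, h⟩⟩
        · rintro ⟨h1, h2⟩
          exact ⟨h1, fun h => h2 h.2⟩
    have hXnot : X ∉ Dset B C \ T := fun h => (Finset.mem_sdiff.mp h).2 hXT
    rw [hHdef, hset, Finset.prod_insert hXnot]
    ring
  rw [hL, hR]
  rw [flip_sum X H hH (fun v b => copyProb B X v b) hg (copyProb_sum B X)]
  rw [flip_sum X H hH (fun v _ => if v = false then (1:ℝ) else 0)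
    (fun _ _ _ => rfl) (fun b => by norm_num)]

lemma Wfun_eq_empty (B : GBN V) (C : Finset V) (hC : IsCutset B.edges C) (b0 : Asg C) :
    ∀ T : Finset V, T ⊆ Dset B C → Wfun B C b0 T = Wfun B C b0 ∅ := by
  intro T
  induction T using Finset.strongInductionOn with
  | _ T ih =>
      intro hTD
      rcases T.eq_empty_or_nonempty with rfl | hne
      · rfl
      · have hTC : ∀ x ∈ T, x ∉ C := fun x hx => (Finset.mem_sdiff.mp (hTD hx)).2
        obtain ⟨X, hXT, hmax⟩ := exists_sink B.edges C hC T hne hTC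
        rw [Wfun_step B C b0 T hTD X hXT hmax]
        exact ih (T.erase X) (Finset.erase_ssubset hXT)
          (Finset.Subset.trans (Finset.erase_subset _ _) hTD)

lemma Wfun_empty_le (B : GBN V) (C : Finset V) (b0 : Asg C) : Wfun B C b0 ∅ ≤ 1 := by
  classical
  unfold Wfun
  have hterm : ∀ b : V → Bool,
      B.ι (fun x => b x.1) * DiracD b0 (fun x => b x.1) *
          (∏ X ∈ (∅ : Finset V), copyProb B X (b X) b) *
          ∏ X ∈ Dset B C \ ∅, (if b X = false then (1:ℝ) else 0)
      = if ((fun x : {x // x ∈ C} => b x.1) = b0 ∧ ∀ X ∈ Dset B C, b X = false)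
          then B.ι (fun x => b x.1) else 0 := by
    intro b
    rw [Finset.prod_empty, Finset.sdiff_empty, mul_one, Finset.prod_boole]
    unfold DiracD
    by_cases h1 : (fun x : {x // x ∈ C} => b x.1) = b0 <;>
      by_cases h2 : ∀ X ∈ Dset B C, b X = false <;>
      simp [h1, h2]
  rw [Finset.sum_congr rfl fun b _ => hterm b, ← Finset.sum_filter]
  have hinj : ∀ b1 ∈ Finset.univ.filter (fun b : V → Bool =>
        ((fun x : {x // x ∈ C} => b x.1) = b0 ∧ ∀ X ∈ Dset B C, b X = false)),
      ∀ b2 ∈ Finset.univ.filter (fun b : V → Bool =>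
        ((fun x : {x // x ∈ C} => b x.1) = b0 ∧ ∀ X ∈ Dset B C, b X = false)),
      (fun x : {x // x ∈ InitSet B.edges} => b1 x.1)
        = (fun x : {x // x ∈ InitSet B.edges} => b2 x.1) → b1 = b2 := by
    intro b1 hb1 b2 hb2 hr
    obtain ⟨hb1C, hb1D⟩ := (Finset.mem_filter.mp hb1).2
    obtain ⟨hb2C, hb2D⟩ := (Finset.mem_filter.mp hb2).2
    funext x
    by_cases hxC : x ∈ C
    · have e1 := congrFun hb1C ⟨x, hxC⟩
      have e2 := congrFun hb2C ⟨x, hxC⟩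
      simp only at e1 e2
      rw [e1, e2]
    · by_cases hxI : x ∈ InitSet B.edges
      · exact congrFun hr ⟨x, hxI⟩
      · have hxD : x ∈ Dset B C := by
          unfold Dset
          rw [Finset.mem_sdiff, Finset.mem_sdiff]
          exact ⟨⟨Finset.mem_univ x, hxI⟩, hxC⟩
        rw [hb1D x hxD, hb2D x hxD]
  calc ∑ b ∈ Finset.univ.filter (fun b : V → Bool =>
        ((fun x : {x // x ∈ C} => b x.1) = b0 ∧ ∀ X ∈ Dset B C, b X = false)),
        B.ι (fun x => b x.1)
      = ∑ d ∈ (Finset.univ.filter (fun b : V → Bool =>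
          ((fun x : {x // x ∈ C} => b x.1) = b0 ∧ ∀ X ∈ Dset B C, b X = false))).image
          (fun b => fun x : {x // x ∈ InitSet B.edges} => b x.1), B.ι d :=
        (Finset.sum_image hinj).symm
    _ ≤ ∑ d : Asg (InitSet B.edges), B.ι d :=
        Finset.sum_le_sum_of_subset_of_nonneg (Finset.subset_univ _)
          (fun d _ _ => B.ι_dist.1 d)
    _ = 1 := B.ι_dist.2

lemma cutsetP_rowsum (B : GBN V) (C : Finset V) (hC : IsCutset B.edges C) (b0 : Asg C) :
    ∑ c, cutsetP B C b0 c ≤ 1 := by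
  classical
  -- Step 1: sum over the cutset marginal is the total mass of `Next`.
  have step1 : ∑ c, cutsetP B C b0 c = ∑ a : V → Bool, Next B C (DiracD b0) a := by
    unfold cutsetP marginal probIf
    rw [Finset.sum_comm]
    refine Finset.sum_congr rfl fun a _ => ?_
    rw [Finset.sum_eq_single (fun y : {x // x ∈ C} => a y.1)]
    · rw [if_pos (fun x => rfl)]
    · intro c _ hne
      rw [if_neg]
      intro hag
      exact hne (funext fun x => hag x).symm
    · intro hnotmem
      exact absurd (Finset.mem_univ _) hnotmem
  -- Step 2: total mass of `Next` is the sum of `distDissect` over everything.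
  have step2 : ∑ a : V → Bool, Next B C (DiracD b0) a
      = ∑ b : V → Bool, ∑ c' : Asg C, distDissect B C (DiracD b0) b c' := by
    unfold Next
    rw [Finset.sum_comm]
    refine Finset.sum_congr rfl fun b _ => ?_
    rw [← Finset.sum_filter]
    refine Finset.sum_bij' (i := fun (a : V → Bool) _ => (fun y : {x // x ∈ C} => a y.1))
      (j := fun (c' : Asg C) _ => fun x => if h : x ∈ C then c' ⟨x, h⟩ else b x)
      (fun a ha => Finset.mem_univ _) (fun c' hc' => ?_) (fun a ha => ?_)
      (fun c' hc' => ?_) (fun a ha => rfl)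
    · rw [Finset.mem_filter]
      refine ⟨Finset.mem_univ _, fun x hx => ?_⟩
      show b x = if h : x ∈ C then c' ⟨x, h⟩ else b x
      rw [dif_neg hx]
    · have hP := (Finset.mem_filter.mp ha).2
      funext x
      show (if _h : x ∈ C then a x else b x) = a x
      by_cases hx : x ∈ C
      · rw [dif_pos hx]
      · rw [dif_neg hx]
        exact hP x hx
    · funext y
      show (if h : y.1 ∈ C then c' ⟨y.1, h⟩ else b y.1) = c' y
      rw [dif_pos y.2]
  -- Step 3: sum out the cutset copies.
  have step3 : ∀ b : V → Bool,
      ∑ c' : Asg C, distDissect B C (DiracD b0) b c'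
      = B.ι (fun x => b x.1) * DiracD b0 (fun x => b x.1) *
          ∏ X ∈ (Finset.univ \ InitSet B.edges) \ C, copyProb B X (b X) b := by
    intro b
    unfold distDissect
    rw [← Finset.mul_sum]
    have hone : ∑ c' : Asg C, ∏ Y ∈ C.attach, copyProb B Y.1 (c' Y) b = 1 := by
      rw [← Finset.univ_eq_attach]
      have h := Finset.prod_univ_sum (fun _ : {x // x ∈ C} => (Finset.univ : Finset Bool))
        (fun Y v => copyProb B Y.1 v b)
      rw [Fintype.piFinset_univ] at h
      rw [← h]
      rw [Finset.prod_congr rfl fun Y _ => by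
        rw [Fintype.sum_bool, copyProb_sum]]
      exact Finset.prod_const_one
    rw [hone, mul_one]
  calc ∑ c, cutsetP B C b0 c
      = ∑ b : V → Bool, ∑ c' : Asg C, distDissect B C (DiracD b0) b c' := by
        rw [step1, step2]
    _ = Wfun B C b0 (Dset B C) := by
        unfold Wfun
        rw [Finset.sum_congr rfl fun b _ => step3 b]
        refine Finset.sum_congr rfl fun b _ => ?_
        rw [Finset.sdiff_self, Finset.prod_empty, mul_one]
        rfl
    _ = Wfun B C b0 ∅ := Wfun_eq_empty B C hC b0 _ (Finset.Subset.refl _)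
    _ ≤ 1 := Wfun_empty_le B C b0

end GBNAux

/-- For any cutset `C` and any initial cutset distribution `γ0`,
the Markov chain semantics and the limit average semantics agree:
`MCS(B,C,γ0) = LimAvg(B,C,γ0)`; in particular both Cesàro limits exist, so
`LimAvg(B,C,γ0)` is defined for every `γ0`. -/
theorem stmt5 {V : Type} [Fintype V] [DecidableEq V]
    (B : GBN V) (C : Finset V) (hC : IsCutset B.edges C)
    (γ0 : Asg C → ℝ) (h0 : IsDist γ0) :
    ∃ γl γa : Asg C → ℝ,
      Tendsto (cesaro (matIter (cutsetP B C) γ0)) atTop (nhds γl) ∧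
      Tendsto (cesaro (nextSeq B C γ0)) atTop (nhds γa) ∧
      Extend B C γl = Extend B C γa := by
  classical
  have hnn : ∀ b c, 0 ≤ cutsetP B C b c := cutsetP_nonneg B C
  have hrow : ∀ b, ∑ c, cutsetP B C b c ≤ 1 := fun b => cutsetP_rowsum B C hC b
  obtain ⟨Q, hQ⟩ := cesaro_MnM_tendsto hnn hrow
  have hcoord : ∀ a b, Tendsto (fun n => MnM (cutsetP B C) n a b) atTop (nhds (Q a b)) :=
    fun a b => tendsto_pi_nhds.mp (tendsto_pi_nhds.mp hQ a) b
  have hiter : ∀ n (c : Asg C),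
      matIter (cutsetP B C) γ0 n c = ∑ b, γ0 b * mpowM (cutsetP B C) n b c := by
    intro n
    induction n with
    | zero =>
        intro c
        show γ0 c = _
        simp only [mpowM]
        rw [Finset.sum_congr rfl fun b _ => by rw [mul_ite, mul_one, mul_zero]]
        rw [Finset.sum_ite_eq', if_pos (Finset.mem_univ _)]
    | succ n ih =>
        intro c
        show vecMul (matIter (cutsetP B C) γ0 n) (cutsetP B C) c = _
        unfold vecMul
        calc ∑ b, matIter (cutsetP B C) γ0 n b * cutsetP B C b c
            = ∑ b, (∑ d, γ0 d * mpowM (cutsetP B C) n d b) * cutsetP B C b c := by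
              exact Finset.sum_congr rfl fun b _ => by rw [ih b]
          _ = ∑ b, ∑ d, γ0 d * mpowM (cutsetP B C) n d b * cutsetP B C b c := by
              exact Finset.sum_congr rfl fun b _ => by rw [Finset.sum_mul]
          _ = ∑ d, ∑ b, γ0 d * mpowM (cutsetP B C) n d b * cutsetP B C b c :=
              Finset.sum_comm
          _ = ∑ d, γ0 d * ∑ b, mpowM (cutsetP B C) n d b * cutsetP B C b c := by
              refine Finset.sum_congr rfl fun d _ => ?_
              rw [Finset.mul_sum]
              exact Finset.sum_congr rfl fun b _ => by ring
          _ = ∑ d, γ0 d * mpowM (cutsetP B C) (n+1) d c := rfl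
  have hces : ∀ n (c : Asg C),
      cesaro (matIter (cutsetP B C) γ0) n c = ∑ b, γ0 b * MnM (cutsetP B C) n b c := by
    intro n c
    unfold cesaro MnM
    rw [Finset.sum_congr rfl fun i _ => hiter i c, Finset.sum_comm, Finset.sum_div]
    refine Finset.sum_congr rfl fun b _ => ?_
    rw [← Finset.mul_sum, mul_div_assoc]
  refine ⟨fun c => ∑ b, γ0 b * Q b c, fun c => ∑ b, γ0 b * Q b c, ?_, ?_, rfl⟩
  · rw [tendsto_pi_nhds]
    intro c
    have h1 : Tendsto (fun n => ∑ b, γ0 b * MnM (cutsetP B C) n b c) atTop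
        (nhds (∑ b, γ0 b * Q b c)) :=
      tendsto_finset_sum _ fun b _ => (hcoord b c).const_mul _
    exact h1.congr fun n => (hces n c).symm
  · have heq : cesaro (nextSeq B C γ0) = cesaro (matIter (cutsetP B C) γ0) := by
      have h := funext (nextSeq_eq_matIter B C γ0)
      rw [h]
    rw [heq, tendsto_pi_nhds]
    intro c
    have h1 : Tendsto (fun n => ∑ b, γ0 b * MnM (cutsetP B C) n b c) atTop
        (nhds (∑ b, γ0 b * Q b c)) :=
      tendsto_finset_sum _ fun b _ => (hcoord b c).const_mul _
    exact h1.congr fun n => (hces n c).symm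

end GBNPaper
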